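/- arXiv:1807.10395 — 3 statements merged into one kernel-verified Lean document; each statement's English description precedes it below -/
import Mathlib

section
/- Let X be a reflexive Banach space (over ℝ or ℂ) and let T ∈ B(X). If the kernel N(T*) of the normed-space adjoint T* is a complemented subspace of X*, then the norm closure of the range R(T) is a complemented subspace of X. (Theorem 3.1(a₂)) -/
open NormedSpace

/-- A (necessarily closed) subspace `M` of a normed space is *complemented* if it is closed and
there exists a closed subspace `N` with `M + N = X` and `M ∩ N = {0}`. -/
def IsComplementedSubspace {𝕜 X : Type*} [NormedField 𝕜] [NormedAddCommGroup X]
    [NormedSpace 𝕜 X] (M : Submodule 𝕜 X) : Prop :=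
  IsClosed (M : Set X) ∧
    ∃ N : Submodule 𝕜 X, IsClosed (N : Set X) ∧ M ⊔ N = ⊤ ∧ M ⊓ N = ⊥

/-- The normed-space adjoint `T* : X* → X*` of `T : X → X`, given by `(T* f) x = f (T x)`. -/
noncomputable def normedAdjoint {𝕜 X : Type*} [NontriviallyNormedField 𝕜]
    [NormedAddCommGroup X] [NormedSpace 𝕜 X] (T : X →L[𝕜] X) :
    StrongDual 𝕜 X →L[𝕜] StrongDual 𝕜 X :=
  (ContinuousLinearMap.compL 𝕜 X X 𝕜).flip T

/-- The pre-annihilator of a set of functionals. -/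
def preAnn {𝕜 X : Type*} [NontriviallyNormedField 𝕜] [NormedAddCommGroup X]
    [NormedSpace 𝕜 X] (S : Submodule 𝕜 (StrongDual 𝕜 X)) : Submodule 𝕜 X where
  carrier := {x | ∀ f ∈ S, f x = 0}
  add_mem' := by
    intro a b ha hb f hf
    simp [ha f hf, hb f hf]
  zero_mem' := by simp
  smul_mem' := by
    intro c a ha f hf
    simp [ha f hf]

lemma mem_preAnn {𝕜 X : Type*} [NontriviallyNormedField 𝕜] [NormedAddCommGroup X]
    [NormedSpace 𝕜 X] {S : Submodule 𝕜 (StrongDual 𝕜 X)} {x : X} :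
    x ∈ preAnn S ↔ ∀ f ∈ S, f x = 0 := Iff.rfl

lemma isClosed_preAnn {𝕜 X : Type*} [NontriviallyNormedField 𝕜] [NormedAddCommGroup X]
    [NormedSpace 𝕜 X] (S : Submodule 𝕜 (StrongDual 𝕜 X)) : IsClosed (preAnn S : Set X) := by
  have : (preAnn S : Set X) = ⋂ f ∈ (S : Set (StrongDual 𝕜 X)), (f ⁻¹' {0}) := by
    ext x
    simp [mem_preAnn]
  rw [this]
  exact isClosed_biInter fun f _ => isClosed_singleton.preimage f.continuous

/-- Separation: a point outside a closed subspace is separated by a functional vanishing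
on the subspace. -/
lemma exists_dual_annihilating {𝕜 X : Type*} [RCLike 𝕜] [NormedAddCommGroup X]
    [NormedSpace 𝕜 X] (M : Submodule 𝕜 X) (hM : IsClosed (M : Set X)) {x : X} (hx : x ∉ M) :
    ∃ f : StrongDual 𝕜 X, (∀ m ∈ M, f m = 0) ∧ f x ≠ 0 := by
  haveI := hM
  set φ : X →L[𝕜] X ⧸ M := ⟨M.mkQ, continuous_quot_mk⟩ with hφ
  have hxbar : (Submodule.Quotient.mk x : X ⧸ M) ≠ 0 := by
    simpa [Submodule.Quotient.mk_eq_zero] using hx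
  obtain ⟨g, -, hgx⟩ := exists_dual_vector 𝕜 _ (norm_ne_zero_iff.2 hxbar)
  refine ⟨g ∘L φ, ?_, ?_⟩
  · intro m hm
    have : φ m = 0 := by
      exact (Submodule.Quotient.mk_eq_zero M).2 hm
    simp [this]
  · have : g ((Submodule.Quotient.mk x : X ⧸ M)) ≠ 0 := by
      rw [hgx]
      exact_mod_cast norm_ne_zero_iff.2 hxbar
    exact this

/-- Theorem 3.1(a₂): if `X` is reflexive and the kernel of `T*` is complemented in `X*`,
then the closure of the range of `T` is complemented in `X`. -/
theorem ker_adjoint_complemented_implies_range_closure_complemented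
    {𝕜 X : Type*} [RCLike 𝕜] [NormedAddCommGroup X] [NormedSpace 𝕜 X] [CompleteSpace X]
    (hrefl : Function.Surjective (inclusionInDoubleDual 𝕜 X))
    (T : X →L[𝕜] X)
    (h : IsComplementedSubspace (LinearMap.ker (normedAdjoint T : StrongDual 𝕜 X →ₗ[𝕜] StrongDual 𝕜 X))) :
    IsComplementedSubspace (LinearMap.range (T : X →ₗ[𝕜] X)).topologicalClosure := by
  obtain ⟨hA, N, hN, hsup, hinf⟩ := h
  set A := LinearMap.ker (normedAdjoint T : StrongDual 𝕜 X →ₗ[𝕜] StrongDual 𝕜 X) with hAdef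
  have hadj : ∀ (f : StrongDual 𝕜 X) (x : X), normedAdjoint T f x = f (T x) := fun f x => rfl
  -- Step 1: closure of range T equals the pre-annihilator of A
  have hrange : (LinearMap.range (T : X →ₗ[𝕜] X)).topologicalClosure = preAnn A := by
    apply le_antisymm
    · apply Submodule.topologicalClosure_minimal
      · rintro x ⟨y, rfl⟩ f hf
        have : normedAdjoint T f = 0 := hf
        calc f (T y) = normedAdjoint T f y := (hadj f y).symm
          _ = 0 := by rw [this]; rfl
      · exact isClosed_preAnn A
    · intro x hx
      by_contra hxc
      obtain ⟨f, hf0, hfx⟩ := exists_dual_annihilating _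
        (LinearMap.range (T : X →ₗ[𝕜] X)).isClosed_topologicalClosure hxc
      have hfA : f ∈ A := by
        rw [hAdef, LinearMap.mem_ker]
        ext y
        have : T y ∈ (LinearMap.range (T : X →ₗ[𝕜] X)).topologicalClosure :=
          Submodule.le_topologicalClosure _ ⟨y, rfl⟩
        simpa [hadj] using hf0 _ this
      exact hfx (hx f hfA)
  rw [hrange]
  -- Step 2: the pre-annihilators of A and N complement each other
  have hcompl : IsCompl A N := ⟨disjoint_iff.2 hinf, codisjoint_iff.2 hsup⟩
  -- the continuous projection onto A along N
  set P : StrongDual 𝕜 X →L[𝕜] StrongDual 𝕜 X :=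
    A.subtypeL ∘L A.linearProjOfClosedCompl N hcompl hA hN with hPdef
  have hPA : ∀ f ∈ A, P f = f := by
    intro f hf
    simp [hPdef, Submodule.coe_continuous_linearProjOfClosedCompl', Submodule.projectionOnto_apply_left hcompl ⟨f, hf⟩]
  have hPN : ∀ f ∈ N, P f = 0 := by
    intro f hf
    simp [hPdef, Submodule.coe_continuous_linearProjOfClosedCompl', Submodule.projectionOnto_apply_right hcompl ⟨f, hf⟩]
  refine ⟨isClosed_preAnn A, preAnn N, isClosed_preAnn N, ?_, ?_⟩
  · -- sup = ⊤, using reflexivity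
    rw [Submodule.eq_top_iff']
    intro x
    -- the double-dual element f ↦ (P f) x comes from some y : X
    obtain ⟨y, hy⟩ := hrefl ((inclusionInDoubleDual 𝕜 X x) ∘L P)
    have hy' : ∀ f : StrongDual 𝕜 X, f y = P f x := fun f => DFunLike.congr_fun hy f
    have hxy : x - y ∈ preAnn A := by
      intro f hf
      have := hy' f
      rw [hPA f hf] at this
      simp [this]
    have hyN : y ∈ preAnn N := by
      intro f hf
      rw [hy' f, hPN f hf]
      rfl
    have : x = (x - y) + y := by abel
    rw [this]
    exact Submodule.add_mem_sup hxy hyN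
  · -- inf = ⊥
    rw [Submodule.eq_bot_iff]
    rintro x ⟨hxA, hxN⟩
    apply NormedSpace.eq_zero_of_forall_dual_eq_zero 𝕜
    intro f
    have hf : f ∈ A ⊔ N := hsup ▸ Submodule.mem_top
    obtain ⟨a, ha, b, hb, rfl⟩ := Submodule.mem_sup.1 hf
    simp [hxA a ha, hxN b hb]
end

section
/- Let X be a reflexive Banach space (over ℝ or ℂ) and let T ∈ B(X). If the norm closure of the range R(T*) of the normed-space adjoint T* is a complemented subspace of X*, then the kernel N(T) is a complemented subspace of X. (Theorem 3.1(b₁)) -/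
open NormedSpace

@[simp] lemma normedAdjoint_apply {𝕜 X : Type*} [NontriviallyNormedField 𝕜]
    [NormedAddCommGroup X] [NormedSpace 𝕜 X] (T : X →L[𝕜] X) (f : StrongDual 𝕜 X) (x : X) :
    normedAdjoint T f x = f (T x) := rfl

/-- Theorem 3.1(b₁): if `X` is reflexive and the closure of the range of `T*` is
complemented in `X*`, then the kernel of `T` is complemented in `X`. -/
theorem range_closure_adjoint_complemented_implies_ker_complemented
    {𝕜 X : Type*} [RCLike 𝕜] [NormedAddCommGroup X] [NormedSpace 𝕜 X] [CompleteSpace X]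
    (hrefl : Function.Surjective (inclusionInDoubleDual 𝕜 X))
    (T : X →L[𝕜] X)
    (h : IsComplementedSubspace (LinearMap.range (normedAdjoint T : StrongDual 𝕜 X →ₗ[𝕜] StrongDual 𝕜 X)).topologicalClosure) :
    IsComplementedSubspace (LinearMap.ker (T : X →ₗ[𝕜] X)) := by
  classical
  set M : Submodule 𝕜 (StrongDual 𝕜 X) := (LinearMap.range (normedAdjoint T : StrongDual 𝕜 X →ₗ[𝕜] StrongDual 𝕜 X)).topologicalClosure with hMdef
  obtain ⟨hMclosed, N, hNclosed, hsup, hinf⟩ := h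
  have hcompl : IsCompl M N := ⟨disjoint_iff.mpr hinf, codisjoint_iff.mpr hsup⟩
  have hcc : M.ClosedComplemented :=
    Submodule.ClosedComplemented.of_isCompl_isClosed hcompl hMclosed hNclosed
  obtain ⟨P, hP⟩ := hcc
  set π : StrongDual 𝕜 X →L[𝕜] StrongDual 𝕜 X := M.subtypeL.comp P with hπdef
  have hπmem : ∀ f, π f ∈ M := fun f => (P f).2
  have hπfix : ∀ f ∈ M, π f = f := fun f hf => congrArg Subtype.val (hP ⟨f, hf⟩)
  -- reflexivity isomorphism
  have hrefl' : Function.Surjective (inclusionInDoubleDualLi 𝕜 (E := X)) := hrefl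
  set e := LinearIsometryEquiv.ofSurjective (inclusionInDoubleDualLi 𝕜 (E := X)) hrefl' with hedef
  have he : ∀ (x : X) (f : StrongDual 𝕜 X), e x f = f x := by
    intro x f
    rw [hedef, LinearIsometryEquiv.coe_ofSurjective]
    rfl
  -- the projection on X induced by π via reflexivity
  set Q : X →L[𝕜] X :=
    ((e.symm.toContinuousLinearEquiv : StrongDual 𝕜 (StrongDual 𝕜 X) ≃L[𝕜] X) :
        StrongDual 𝕜 (StrongDual 𝕜 X) →L[𝕜] X).comp
      ((normedAdjoint π).comp
        ((e.toContinuousLinearEquiv : X ≃L[𝕜] StrongDual 𝕜 (StrongDual 𝕜 X)) :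
          X →L[𝕜] StrongDual 𝕜 (StrongDual 𝕜 X))) with hQdef
  have heQ : ∀ (x : X) (f : StrongDual 𝕜 X), e (Q x) f = (π f) x := by
    intro x f
    have : e (Q x) = normedAdjoint π (e x) := by
      simp [hQdef]
      exact e.toContinuousLinearEquiv.apply_symm_apply _
    rw [this]
    simp [he]
  have hQQ : ∀ x, Q (Q x) = Q x := by
    intro x
    apply e.injective
    apply ContinuousLinearMap.ext
    intro f
    rw [heQ (Q x) f, ← he (Q x) (π f), heQ x (π f), hπfix (π f) (hπmem f), heQ x f]
  -- every element of M annihilates ker T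
  have hMann : ∀ g ∈ M, ∀ x ∈ LinearMap.ker (T : X →ₗ[𝕜] X), g x = 0 := by
    intro g hg x hx
    have hx' : T x = 0 := hx
    have hle : M ≤ LinearMap.ker ((ContinuousLinearMap.apply 𝕜 𝕜 x ∘L
        (ContinuousLinearMap.id 𝕜 (StrongDual 𝕜 X)) : StrongDual 𝕜 X →L[𝕜] 𝕜) : StrongDual 𝕜 X →ₗ[𝕜] 𝕜) := by
      apply Submodule.topologicalClosure_minimal
      · rintro g ⟨h', rfl⟩
        simp [LinearMap.mem_ker, hx']
      · exact ContinuousLinearMap.isClosed_ker _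
    simpa using hle hg
  -- kernel of Q equals kernel of T
  have hker : LinearMap.ker (Q : X →ₗ[𝕜] X) = LinearMap.ker (T : X →ₗ[𝕜] X) := by
    ext x
    simp only [LinearMap.mem_ker, ContinuousLinearMap.coe_coe]
    constructor
    · intro hx
      have hzero : ∀ f : StrongDual 𝕜 X, π f x = 0 := by
        intro f
        rw [← heQ x f, hx]
        simp [he]
      apply NormedSpace.eq_zero_of_forall_dual_eq_zero 𝕜
      intro h'
      have hmem : normedAdjoint T h' ∈ M := Submodule.le_topologicalClosure _ ⟨h', rfl⟩
      have := hzero (normedAdjoint T h')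
      rwa [hπfix _ hmem, normedAdjoint_apply] at this
    · intro hx
      apply e.injective
      apply ContinuousLinearMap.ext
      intro f
      rw [heQ x f]
      simp [hMann (π f) (hπmem f) x hx, he]
  -- conclude
  rw [← hker]
  refine ⟨ContinuousLinearMap.isClosed_ker Q, LinearMap.range (Q : X →ₗ[𝕜] X), ?_, ?_, ?_⟩
  · have : (LinearMap.range (Q : X →ₗ[𝕜] X) : Set X) =
        (LinearMap.ker ((ContinuousLinearMap.id 𝕜 X - Q : X →L[𝕜] X) : X →ₗ[𝕜] X) : Set X) := by
      ext x
      simp only [SetLike.mem_coe, LinearMap.mem_range, LinearMap.mem_ker,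
        ContinuousLinearMap.coe_sub', Pi.sub_apply, ContinuousLinearMap.coe_id', id_eq,
        ContinuousLinearMap.coe_coe, sub_eq_zero]
      constructor
      · rintro ⟨y, rfl⟩; exact (hQQ y).symm ▸ rfl
      · intro hx; exact ⟨x, hx.symm⟩
    rw [this]
    exact ContinuousLinearMap.isClosed_ker _
  · rw [eq_top_iff]
    intro x _
    rw [Submodule.mem_sup]
    exact ⟨x - Q x, by simp [LinearMap.mem_ker, map_sub, hQQ x], Q x, ⟨x, rfl⟩, by abel⟩
  · rw [eq_bot_iff]
    rintro x ⟨hx1, y, rfl⟩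
    have : Q (Q y) = 0 := hx1
    rw [hQQ y] at this
    simp [this]
end

section
/- Let X be a Banach space (over ℝ or ℂ) and let T, K ∈ B(X). If T has closed range R(T) which is a complemented subspace of X, the kernel N(T) is finite dimensional, and K is compact, then: R(T+K) is closed and complemented in X, N(T+K) is complemented in X, and the normed-space adjoint (T+K)* = T* + K* has closed range R(T*+K*) which is complemented in X* and complemented kernel N(T*+K*) in X*. (Corollary 5.3) -/
open NormedSpace

namespace Cor53

/-- Range of a continuous linear map, as a submodule. -/
abbrev range {𝕜 E F : Type*} [RCLike 𝕜] [NormedAddCommGroup E] [NormedSpace 𝕜 E]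
    [NormedAddCommGroup F] [NormedSpace 𝕜 F] (f : E →L[𝕜] F) : Submodule 𝕜 F :=
  LinearMap.range (f : E →ₗ[𝕜] F)

/-- Kernel of a continuous linear map, as a submodule. -/
abbrev ker {𝕜 E F : Type*} [RCLike 𝕜] [NormedAddCommGroup E] [NormedSpace 𝕜 E]
    [NormedAddCommGroup F] [NormedSpace 𝕜 F] (f : E →L[𝕜] F) : Submodule 𝕜 E :=
  LinearMap.ker (f : E →ₗ[𝕜] F)
open ContinuousLinearMap Filter Topology

set_option linter.unusedSectionVars false

section General

variable {𝕜 E : Type*} [RCLike 𝕜] [NormedAddCommGroup E] [NormedSpace 𝕜 E]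

theorem isComplementedSubspace_iff_closedComplemented [CompleteSpace E] (M : Submodule 𝕜 E) :
    IsComplementedSubspace M ↔ M.ClosedComplemented := by
  rw [Submodule.closedComplemented_iff_isClosed_exists_isClosed_isCompl]
  refine and_congr Iff.rfl (exists_congr fun N => and_congr Iff.rfl ?_)
  rw [isCompl_iff, disjoint_iff, codisjoint_iff, and_comm]

theorem closedComplemented_range_of_idem (π : E →L[𝕜] E) (h : π ∘L π = π) :
    (range π).ClosedComplemented := by
  refine ⟨π.codRestrict (range π) (fun x => LinearMap.mem_range_self _ x), ?_⟩
  rintro ⟨-, y, rfl⟩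
  exact Subtype.ext (ContinuousLinearMap.ext_iff.1 h y)

theorem closedComplemented_ker_of_idem (π : E →L[𝕜] E) (h : π ∘L π = π) :
    (ker π).ClosedComplemented := by
  have h2 : (1 - π) ∘L (1 - π) = 1 - π := by
    ext x
    have := ContinuousLinearMap.ext_iff.1 h x
    simp only [ContinuousLinearMap.comp_apply] at this ⊢
    simp only [ContinuousLinearMap.sub_apply, ContinuousLinearMap.one_apply, map_sub, this]
    abel
  have hk : ker π = range (1 - π) := by
    apply le_antisymm
    · intro x hx
      rw [LinearMap.mem_ker] at hx
      exact ⟨x, by simp [hx]⟩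
    · rintro _ ⟨y, rfl⟩
      have := ContinuousLinearMap.ext_iff.1 h y
      simp only [ContinuousLinearMap.comp_apply] at this
      simp [LinearMap.mem_ker, this]
  rw [hk]
  exact closedComplemented_range_of_idem _ h2

theorem closedComplemented_of_relRegular (B S : E →L[𝕜] E) (h : B ∘L S ∘L B = B) :
    (range B).ClosedComplemented ∧ (ker B).ClosedComplemented := by
  have hpt : ∀ x, B (S (B x)) = B x := fun x => ContinuousLinearMap.ext_iff.1 h x
  constructor
  · have hidem : (B ∘L S) ∘L (B ∘L S) = B ∘L S := by
      ext x; exact hpt (S x)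
    have hr : range B = range (B ∘L S) := by
      apply le_antisymm
      · rintro _ ⟨x, rfl⟩; exact ⟨B x, hpt x⟩
      · rintro _ ⟨x, rfl⟩; exact ⟨S x, rfl⟩
    rw [hr]; exact closedComplemented_range_of_idem _ hidem
  · have hidem : (S ∘L B) ∘L (S ∘L B) = S ∘L B := by
      ext x
      simp only [ContinuousLinearMap.comp_apply]
      rw [hpt x]
    have hk : ker B = ker (S ∘L B) := by
      apply le_antisymm
      · intro x hx
        rw [LinearMap.mem_ker, ContinuousLinearMap.coe_coe] at hx ⊢
        simp [ContinuousLinearMap.comp_apply, hx]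
      · intro x hx
        rw [LinearMap.mem_ker, ContinuousLinearMap.coe_coe] at hx ⊢
        have : B x = B (S (B x)) := (hpt x).symm
        rw [this]
        simp only [ContinuousLinearMap.comp_apply] at hx
        rw [hx, map_zero]
    rw [hk]; exact closedComplemented_ker_of_idem _ hidem

theorem isCompactOperator_of_finiteDimensional_range (f : E →L[𝕜] E)
    (hfd : FiniteDimensional 𝕜 (range f)) : IsCompactOperator ⇑f := by
  haveI := hfd
  haveI : ProperSpace (range f) := FiniteDimensional.proper_rclike 𝕜 (range f)
  refine ⟨Subtype.val '' Metric.closedBall (0 : range f) ‖f‖,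
    ((isCompact_closedBall _ _).image continuous_subtype_val), ?_⟩
  refine Filter.mem_of_superset (Metric.closedBall_mem_nhds (0 : E) one_pos) ?_
  intro x hx
  refine ⟨⟨f x, LinearMap.mem_range_self _ x⟩, ?_, rfl⟩
  rw [Metric.mem_closedBall, dist_zero_right]
  show ‖f x‖ ≤ ‖f‖
  calc ‖f x‖ ≤ ‖f‖ * ‖x‖ := f.le_opNorm x
  _ ≤ ‖f‖ * 1 := by
      gcongr
      exact mem_closedBall_zero_iff.1 hx
  _ = ‖f‖ := mul_one _

theorem normedAdjoint_comp (P Q : E →L[𝕜] E) :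
    normedAdjoint (P ∘L Q) = normedAdjoint Q ∘L normedAdjoint P := by
  ext f x
  rfl

end General

variable {𝕜 X : Type*} [RCLike 𝕜] [NormedAddCommGroup X] [NormedSpace 𝕜 X] [CompleteSpace X]

/-- `B` restricted to a complement of its kernel is an equivalence onto its (closed) range. -/
theorem exists_equiv (B : X →L[𝕜] X) (M : Submodule 𝕜 X) (hMc : IsClosed (M : Set X))
    (hM : IsCompl (ker B) M) (hrc : IsClosed ((range B : Submodule 𝕜 X) : Set X)) :
    ∃ e : M ≃L[𝕜] range B, ∀ m : M, (e m : X) = B m := by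
  haveI : CompleteSpace M := hMc.completeSpace_coe
  haveI : CompleteSpace (range B) := hrc.completeSpace_coe
  set f : M →L[𝕜] range B :=
    (B.comp M.subtypeL).codRestrict (range B) (fun x => LinearMap.mem_range_self _ _) with hf
  have hfapp : ∀ m : M, (f m : X) = B m := fun m => rfl
  have hbij : Function.Bijective f := by
    constructor
    · intro a b hab
      have h1 : B ((a : X) - b) = 0 := by
        have := congrArg (Subtype.val) hab
        rw [hfapp, hfapp] at this
        rw [map_sub, this, sub_self]
      have h2 : ((a : X) - b) ∈ ker B ⊓ M := ⟨LinearMap.mem_ker.2 h1, M.sub_mem a.2 b.2⟩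
      rw [hM.inf_eq_bot] at h2
      exact Subtype.ext (sub_eq_zero.1 h2)
    · rintro ⟨-, x, rfl⟩
      have hx : x ∈ ker B ⊔ M := by rw [hM.sup_eq_top]; trivial
      obtain ⟨u, hu, v, hv, rfl⟩ := Submodule.mem_sup.1 hx
      refine ⟨⟨v, hv⟩, Subtype.ext ?_⟩
      rw [hfapp]
      simp [show B u = 0 from LinearMap.mem_ker.1 hu]
  let e₀ : M ≃ₗ[𝕜] range B := LinearEquiv.ofBijective (f : M →ₗ[𝕜] range B) hbij
  exact ⟨e₀.toContinuousLinearEquivOfContinuous f.continuous, fun m => rfl⟩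

/-- Generalized inverse of an operator with complemented kernel and range. -/
theorem exists_generalized_inverse (B : X →L[𝕜] X) (hk : (ker B).ClosedComplemented)
    (hr : (range B).ClosedComplemented) :
    ∃ S : X →L[𝕜] X, B ∘L S ∘L B = B := by
  obtain ⟨M, hMc, hM⟩ := hk.exists_isClosed_isCompl
  have hrc := hr.isClosed
  obtain ⟨πR, hπR⟩ := hr
  obtain ⟨e, he⟩ := exists_equiv B M hMc hM hrc
  refine ⟨M.subtypeL ∘L ((e.symm : range B →L[𝕜] M) ∘L πR), ?_⟩
  ext x
  simp only [ContinuousLinearMap.comp_apply, Submodule.subtypeL_apply,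
    ContinuousLinearEquiv.coe_coe]
  have h1 : πR (B x) = ⟨B x, LinearMap.mem_range_self _ x⟩ :=
    hπR ⟨B x, LinearMap.mem_range_self _ x⟩
  rw [h1]
  have h2 := he (e.symm ⟨B x, LinearMap.mem_range_self _ x⟩)
  rw [e.apply_symm_apply] at h2
  exact h2.symm

/-- Kernel of `D` is finite dimensional when `D - 1` is compact. -/
theorem finiteDimensional_ker_of_compact (D : X →L[𝕜] X)
    (hC : IsCompactOperator ⇑(D - 1)) : FiniteDimensional 𝕜 (ker D) := by
  obtain ⟨Q, hQc, hQ⟩ := hC.image_closedBall_subset_compact 1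
  set N := ker D
  have himg : (Subtype.val '' Metric.closedBall (0 : N) 1)
      = (N : Set X) ∩ Metric.closedBall 0 1 := by
    ext y
    constructor
    · rintro ⟨z, hz, rfl⟩
      refine ⟨z.2, ?_⟩
      rw [Metric.mem_closedBall, dist_zero_right] at hz ⊢
      exact hz
    · rintro ⟨hy, hy2⟩
      refine ⟨⟨y, hy⟩, ?_, rfl⟩
      rw [Metric.mem_closedBall, dist_zero_right] at hy2 ⊢
      exact hy2
  have hsub : (N : Set X) ∩ Metric.closedBall 0 1 ⊆ -Q := by
    rintro y ⟨hy, hy2⟩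
    have hDy : D y = 0 := LinearMap.mem_ker.1 hy
    have : (D - 1) y = -y := by simp [hDy]
    rw [Set.mem_neg]
    have hmem : (D - 1) y ∈ Q := hQ ⟨y, hy2, rfl⟩
    rwa [this] at hmem
  have hcompact : IsCompact (Subtype.val '' Metric.closedBall (0 : N) 1) := by
    rw [himg]
    refine hQc.neg.of_isClosed_subset ?_ hsub
    exact (ContinuousLinearMap.isClosed_ker D).inter Metric.isClosed_closedBall
  have hN : IsCompact (Metric.closedBall (0 : N) 1) := by
    rw [Topology.IsEmbedding.subtypeVal.isCompact_iff]
    exact hcompact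
  exact FiniteDimensional.of_isCompact_closedBall₀ 𝕜 one_pos hN

/-- `B` is bounded below on a closed subspace avoiding its kernel,
provided `A ∘ B = 1 + compact`. -/
theorem exists_bound_of_compact (B A : X →L[𝕜] X)
    (hC : IsCompactOperator ⇑(A ∘L B - 1)) {M : Submodule 𝕜 X} (hMc : IsClosed (M : Set X))
    (hdisj : Disjoint M (ker B)) :
    ∃ c : ℝ, 0 < c ∧ ∀ x ∈ M, c * ‖x‖ ≤ ‖B x‖ := by
  by_contra hcon
  push_neg at hcon
  have hseq : ∀ n : ℕ, ∃ u : X, u ∈ M ∧ ‖u‖ = 1 ∧ ‖B u‖ < 1 / (n + 1) := by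
    intro n
    obtain ⟨x, hxM, hx⟩ := hcon (1 / (n + 1)) (by positivity)
    have hx0 : x ≠ 0 := by
      rintro rfl
      simp at hx
    have hnx : ‖x‖ ≠ 0 := norm_ne_zero_iff.2 hx0
    refine ⟨((‖x‖ : 𝕜))⁻¹ • x, M.smul_mem _ hxM, ?_, ?_⟩
    · rw [norm_smul, norm_inv, RCLike.norm_ofReal, abs_of_nonneg (norm_nonneg x)]
      field_simp
    · rw [map_smul, norm_smul, norm_inv, RCLike.norm_ofReal, abs_of_nonneg (norm_nonneg x)]
      rw [inv_mul_lt_iff₀ (lt_of_le_of_ne (norm_nonneg x) (Ne.symm hnx))]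
      calc ‖B x‖ < 1 / (n + 1) * ‖x‖ := hx
      _ = ‖x‖ * (1 / (n + 1)) := by ring
  choose u huM hu1 huB using hseq
  set C := A ∘L B - 1
  obtain ⟨Q, hQc, hQ⟩ := hC.image_closedBall_subset_compact 1
  have humem : ∀ n, C (u n) ∈ Q := fun n =>
    hQ ⟨u n, by rw [Metric.mem_closedBall, dist_zero_right, hu1 n], rfl⟩
  obtain ⟨y, -, φ, hφ, hy⟩ := hQc.tendsto_subseq humem
  have hBu : Tendsto (fun n => B (u n)) atTop (𝓝 0) := by
    apply squeeze_zero_norm (fun n => (huB n).le)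
    exact tendsto_one_div_add_atTop_nhds_zero_nat
  have hABu : Tendsto (fun n => A (B (u (φ n)))) atTop (𝓝 0) := by
    have := (A.continuous.tendsto 0).comp (hBu.comp hφ.tendsto_atTop)
    simpa [Function.comp_def] using this
  have hux : Tendsto (fun n => u (φ n)) atTop (𝓝 (-y)) := by
    have heq : (fun n => u (φ n)) = fun n => A (B (u (φ n))) - C (u (φ n)) := by
      funext n
      simp [C]
    rw [heq]
    simpa using hABu.sub hy
  have hyM : -y ∈ M := hMc.mem_of_tendsto hux (Eventually.of_forall fun n => huM _)
  have hynorm : ‖(-y : X)‖ = 1 := by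
    have h1 : Tendsto (fun n => ‖u (φ n)‖) atTop (𝓝 ‖(-y : X)‖) := hux.norm
    have h2 : Tendsto (fun n => ‖u (φ n)‖) atTop (𝓝 1) := by
      simpa [hu1] using tendsto_const_nhds (x := (1 : ℝ))
    exact tendsto_nhds_unique h1 h2
  have hBy : -y ∈ ker B := by
    rw [LinearMap.mem_ker]
    have h1 : Tendsto (fun n => B (u (φ n))) atTop (𝓝 (B (-y))) :=
      (B.continuous.tendsto _).comp hux
    have h2 : Tendsto (fun n => B (u (φ n))) atTop (𝓝 0) := hBu.comp hφ.tendsto_atTop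
    exact tendsto_nhds_unique h1 h2
  have : (-y : X) = 0 := by
    have := hdisj.le_bot ⟨hyM, hBy⟩
    simpa using this
  rw [this] at hynorm
  simp at hynorm

theorem isClosed_range_of_bound (B : X →L[𝕜] X) {M : Submodule 𝕜 X}
    (hMc : IsClosed (M : Set X)) (hM : IsCompl (ker B) M) {c : ℝ} (hc : 0 < c)
    (hbd : ∀ x ∈ M, c * ‖x‖ ≤ ‖B x‖) :
    IsClosed ((range B : Submodule 𝕜 X) : Set X) := by
  haveI : CompleteSpace M := hMc.completeSpace_coe
  set f : M →L[𝕜] X := B ∘L M.subtypeL with hf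
  have hrange : ((range B : Submodule 𝕜 X) : Set X) = Set.range f := by
    ext y
    constructor
    · rintro ⟨x, rfl⟩
      have hx : x ∈ ker B ⊔ M := by rw [hM.sup_eq_top]; trivial
      obtain ⟨u, hu, v, hv, rfl⟩ := Submodule.mem_sup.1 hx
      exact ⟨⟨v, hv⟩, by simp [f, show B u = 0 from LinearMap.mem_ker.1 hu]⟩
    · rintro ⟨m, rfl⟩
      exact ⟨m, rfl⟩
  have hanti : AntilipschitzWith (⟨c, hc.le⟩ : NNReal)⁻¹ f := by
    apply f.antilipschitz_of_bound
    intro m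
    have := hbd (m : X) m.2
    rw [NNReal.coe_inv (⟨c, hc.le⟩ : NNReal)]
    have hnm : ‖m‖ = ‖(m : X)‖ := rfl
    rw [hnm, ← mul_le_mul_iff_right₀ hc]
    calc c * ‖(m : X)‖ ≤ ‖B (m : X)‖ := this
    _ = c * ((⟨c, hc.le⟩ : NNReal) : ℝ)⁻¹ * ‖f m‖ := by
        simp only [NNReal.coe_mk]
        rw [mul_inv_cancel₀ hc.ne', one_mul]
        rfl
    _ = c * (((⟨c, hc.le⟩ : NNReal) : ℝ)⁻¹ * ‖f m‖) := by ring
  rw [hrange]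
  exact hanti.isClosed_range f.uniformContinuous

theorem finiteDimensional_quotient_of_compact (D : X →L[𝕜] X)
    (hC : IsCompactOperator ⇑(D - 1))
    (hcl : IsClosed ((range D : Submodule 𝕜 X) : Set X)) :
    FiniteDimensional 𝕜 (X ⧸ (range D : Submodule 𝕜 X)) := by
  set R : Submodule 𝕜 X := range D with hR
  haveI : IsClosed (R : Set X) := hcl
  by_contra hfin
  obtain ⟨R₀, g, hR₀, hg1, hg2⟩ := exists_seq_norm_le_one_le_norm_sub (𝕜 := 𝕜) hfin
  have hlift : ∀ n, ∃ x : X, Submodule.Quotient.mk x = g n ∧ ‖x‖ < ‖g n‖ + 1 := fun n =>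
    Submodule.Quotient.norm_mk_lt (g n) one_pos
  choose x hx hxn using hlift
  have hxb : ∀ n, x n ∈ Metric.closedBall (0 : X) (R₀ + 1) := by
    intro n
    rw [Metric.mem_closedBall, dist_zero_right]
    have := (hxn n).le
    have h2 : ‖g n‖ + 1 ≤ R₀ + 1 := by linarith [hg1 n]
    linarith
  obtain ⟨Q, hQc, hQ⟩ := hC.image_closedBall_subset_compact (R₀ + 1)
  have hmem : ∀ n, (D - 1) (x n) ∈ Q := fun n => hQ ⟨x n, hxb n, rfl⟩
  have hsep : ∀ m n : ℕ, m ≠ n → 1 ≤ ‖(D - 1) (x m) - (D - 1) (x n)‖ := by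
    intro m n hmn
    have key : R.mkQ ((D - 1) (x m) - (D - 1) (x n)) = g n - g m := by
      have hD : ∀ k, R.mkQ (D (x k)) = 0 := fun k => by
        rw [Submodule.mkQ_apply, Submodule.Quotient.mk_eq_zero]
        exact LinearMap.mem_range_self _ _
      have hxk : ∀ k, R.mkQ (x k) = g k := fun k => hx k
      have : (D - 1) (x m) - (D - 1) (x n) = D (x m) - D (x n) - x m + x n := by
        simp only [ContinuousLinearMap.sub_apply, ContinuousLinearMap.one_apply]
        abel
      rw [this]
      simp only [map_add, map_sub, hD, hxk]
      abel
    have hle : ‖R.mkQ ((D - 1) (x m) - (D - 1) (x n))‖ ≤ ‖(D - 1) (x m) - (D - 1) (x n)‖ :=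
      Submodule.Quotient.norm_mk_le _ _
    rw [key] at hle
    calc (1 : ℝ) ≤ ‖g n - g m‖ := hg2 (Ne.symm hmn)
    _ ≤ _ := hle
  obtain ⟨y, -, φ, hφ, hy⟩ := hQc.tendsto_subseq hmem
  have hcs : CauchySeq (fun n => (D - 1) (x (φ n))) := hy.cauchySeq
  obtain ⟨N, hN⟩ := Metric.cauchySeq_iff.1 hcs 1 one_pos
  have hd := hN N le_rfl (N + 1) (Nat.le_succ N)
  rw [dist_eq_norm] at hd
  exact absurd hd (not_lt.2 (hsep _ _ (hφ.injective.ne (Nat.succ_ne_self N).symm ∘ fun h => h)))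

theorem isClosed_sup_finiteDimensional {p W : Submodule 𝕜 X} (hp : IsClosed (p : Set X))
    [FiniteDimensional 𝕜 W] : IsClosed ((p ⊔ W : Submodule 𝕜 X) : Set X) := by
  haveI : IsClosed (p : Set X) := hp
  have heq : p ⊔ W = Submodule.comap p.mkQ (Submodule.map p.mkQ W) := by
    rw [Submodule.comap_map_mkQ]
  rw [heq]
  have hcont : Continuous p.mkQ :=
    AddMonoidHomClass.continuous_of_bound p.mkQ 1 (fun x => by
      simpa using Submodule.Quotient.norm_mk_le p x)
  haveI : FiniteDimensional 𝕜 (Submodule.map p.mkQ W) := Module.Finite.map W p.mkQ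
  have hcl : IsClosed ((Submodule.map p.mkQ W : Submodule 𝕜 (X ⧸ p)) : Set (X ⧸ p)) :=
    Submodule.closed_of_finiteDimensional _
  exact hcl.preimage hcont

theorem ClosedComplemented.sup_finiteDimensional {p W : Submodule 𝕜 X}
    (hp : p.ClosedComplemented) [FiniteDimensional 𝕜 W] : (p ⊔ W).ClosedComplemented := by
  obtain ⟨q, hq, hpq⟩ := hp.exists_isClosed_isCompl
  haveI : CompleteSpace q := hq.completeSpace_coe
  set pr : X →L[𝕜] q := q.linearProjOfClosedCompl p hpq.symm hq hp.isClosed with hpr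
  set g : X →L[𝕜] X := q.subtypeL ∘L pr with hg
  have hprq : ∀ (b : q), pr (b : X) = b := fun b => by
    rw [hpr, Submodule.coe_continuous_linearProjOfClosedCompl']
    exact Submodule.linearProjOfIsCompl_apply_left hpq.symm b
  have hprp : ∀ (a : p), pr (a : X) = 0 := fun a => by
    rw [hpr, Submodule.coe_continuous_linearProjOfClosedCompl']
    exact Submodule.linearProjOfIsCompl_apply_right hpq.symm a
  have hgsub : ∀ x : X, x - g x ∈ p := by
    intro x
    have hx : x ∈ p ⊔ q := by rw [hpq.sup_eq_top]; trivial
    obtain ⟨a, ha, b, hb, rfl⟩ := Submodule.mem_sup.1 hx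
    have : g (a + b) = b := by
      rw [hg]
      simp only [ContinuousLinearMap.comp_apply, map_add, Submodule.subtypeL_apply]
      rw [show pr a = pr ((⟨a, ha⟩ : p) : X) from rfl, hprp ⟨a, ha⟩,
        show pr b = pr ((⟨b, hb⟩ : q) : X) from rfl, hprq ⟨b, hb⟩]
      simp
    rw [this]
    simpa using ha
  set W' := Submodule.map (g : X →ₗ[𝕜] X) W with hW'
  haveI : FiniteDimensional 𝕜 W' := Module.Finite.map W (g : X →ₗ[𝕜] X)
  have hWq : W' ≤ q := by
    rintro - ⟨w, hw, rfl⟩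
    exact (pr w).2
  have hsup : p ⊔ W = p ⊔ W' := by
    apply le_antisymm
    · refine sup_le le_sup_left (fun w hw => ?_)
      have : w = (w - g w) + g w := by abel
      rw [this]
      exact Submodule.add_mem _ (Submodule.mem_sup_left (hgsub w))
        (Submodule.mem_sup_right ⟨w, hw, rfl⟩)
    · refine sup_le le_sup_left ?_
      rintro - ⟨w, hw, rfl⟩
      have : g w = w - (w - g w) := by abel
      rw [ContinuousLinearMap.coe_coe, this]
      exact Submodule.sub_mem _ (Submodule.mem_sup_right hw) (Submodule.mem_sup_left (hgsub w))
  set W'' : Submodule 𝕜 q := Submodule.comap q.subtype W' with hW''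
  haveI : FiniteDimensional 𝕜 W'' :=
    LinearEquiv.finiteDimensional (Submodule.comapSubtypeEquivOfLe hWq).symm
  have hW''c : W''.ClosedComplemented := Submodule.ClosedComplemented.of_finiteDimensional W''
  obtain ⟨q₂, hq₂c, hq₂⟩ := hW''c.exists_isClosed_isCompl
  set N := Submodule.map q.subtype q₂ with hN
  have hNc : IsClosed (N : Set X) := by
    have : (N : Set X) = Subtype.val '' (q₂ : Set q) := by
      rw [hN]; rfl
    rw [this]
    exact hq.isClosedMap_subtype_val _ hq₂c
  have hmapW : Submodule.map q.subtype W'' = W' := by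
    rw [hW'', Submodule.map_comap_subtype, inf_eq_right.2 hWq]
  have hdisj : Disjoint (p ⊔ W') N := by
    rw [disjoint_iff]
    apply (Submodule.eq_bot_iff _).2
    rintro x ⟨hx1, hx2⟩
    obtain ⟨a, ha, b, hb, rfl⟩ := Submodule.mem_sup.1 hx1
    have hbq : b ∈ q := hWq hb
    have hxq : a + b ∈ q := Submodule.map_subtype_le q q₂ hx2
    have haq : a ∈ q := by
      have : a = (a + b) - b := by abel
      rw [this]; exact Submodule.sub_mem _ hxq hbq
    have ha0 : a = 0 := by
      have := hpq.disjoint.le_bot ⟨ha, haq⟩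
      simpa using this
    rw [ha0, zero_add] at hx2 ⊢
    have hbW'N : b ∈ W' ⊓ N := ⟨hb, hx2⟩
    have : W' ⊓ N = ⊥ := by
      rw [← hmapW, hN, ← Submodule.map_inf _ (Submodule.injective_subtype q),
        hq₂.disjoint.eq_bot, Submodule.map_bot]
    rw [this] at hbW'N
    simpa using hbW'N
  have hcodisj : Codisjoint (p ⊔ W') N := by
    rw [codisjoint_iff]
    rw [sup_assoc]
    have : W' ⊔ N = q := by
      rw [← hmapW, hN, ← Submodule.map_sup, hq₂.sup_eq_top, Submodule.map_top,
        Submodule.range_subtype]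
    rw [this, hpq.sup_eq_top]
  rw [hsup]
  exact Submodule.ClosedComplemented.of_isCompl_isClosed ⟨hdisj, hcodisj⟩
    (hsup ▸ isClosed_sup_finiteDimensional hp.isClosed) hNc

/-- Atkinson-type theorem: if `A ∘ B₀ = 1 + compact` then `B₀` has finite dimensional kernel
and closed complemented range. -/
theorem atkinson (B₀ A : X →L[𝕜] X) (hC : IsCompactOperator ⇑(A ∘L B₀ - 1)) :
    (range B₀).ClosedComplemented ∧ FiniteDimensional 𝕜 (ker B₀) := by
  set D := A ∘L B₀ with hD
  haveI hkD : FiniteDimensional 𝕜 (ker D) := finiteDimensional_ker_of_compact D hC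
  have hkB : FiniteDimensional 𝕜 (ker B₀) := by
    apply Submodule.finiteDimensional_of_le (S₂ := ker D)
    intro x hx
    rw [LinearMap.mem_ker, ContinuousLinearMap.coe_coe] at hx ⊢
    simp [hD, hx]
  have hkDc : (ker D).ClosedComplemented := Submodule.ClosedComplemented.of_finiteDimensional _
  obtain ⟨M, hMc, hM⟩ := hkDc.exists_isClosed_isCompl
  have hC1 : IsCompactOperator ⇑((1 : X →L[𝕜] X) ∘L D - 1) := by
    have h1 : (1 : X →L[𝕜] X) ∘L D = D := by ext x; rfl
    rw [h1]; exact hC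
  obtain ⟨c, hc, hbd⟩ := exists_bound_of_compact D 1 hC1 hMc hM.symm.disjoint
  have hrDcl := isClosed_range_of_bound D hMc hM hc hbd
  haveI hqfd := finiteDimensional_quotient_of_compact D hC hrDcl
  have hrDcc : (range D).ClosedComplemented :=
    Submodule.ClosedComplemented.of_quotient_finiteDimensional hrDcl
  obtain ⟨πD, hπD⟩ := hrDcc
  obtain ⟨e, he⟩ := exists_equiv D M hMc hM hrDcl
  set π : X →L[𝕜] X := B₀ ∘L (M.subtypeL ∘L ((e.symm : range D →L[𝕜] M) ∘L (πD ∘L A)))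
    with hπ
  have hπval : ∀ x : X, π x = B₀ ((e.symm (πD (A x)) : M) : X) := fun x => rfl
  have hπmem : ∀ x : X, π x ∈ Submodule.map (B₀ : X →ₗ[𝕜] X) M := fun x =>
    ⟨((e.symm (πD (A x)) : M) : X), (e.symm (πD (A x))).2, rfl⟩
  have hπfix : ∀ m : M, π (B₀ (m : X)) = B₀ (m : X) := by
    intro m
    have h1 : A (B₀ (m : X)) = D (m : X) := rfl
    have h3 : (⟨D (m : X), LinearMap.mem_range_self _ _⟩ : range D) = e m :=
      Subtype.ext (he m).symm
    have h2 : πD (D (m : X)) = e m :=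
      (hπD ⟨D (m : X), LinearMap.mem_range_self _ _⟩).trans h3
    rw [hπval, h1, h2, e.symm_apply_apply]
  have hrangeπ : range π = Submodule.map (B₀ : X →ₗ[𝕜] X) M := by
    apply le_antisymm
    · rintro - ⟨x, rfl⟩; exact hπmem x
    · rintro - ⟨m, hm, rfl⟩
      exact ⟨B₀ m, hπfix ⟨m, hm⟩⟩
  have hidem : π ∘L π = π := by
    ext x
    obtain ⟨m, hm, hEq⟩ := hπmem x
    show π (π x) = π x
    rw [← hEq]
    exact hπfix ⟨m, hm⟩
  have hBM : (Submodule.map (B₀ : X →ₗ[𝕜] X) M).ClosedComplemented := by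
    rw [← hrangeπ]; exact closedComplemented_range_of_idem π hidem
  haveI : FiniteDimensional 𝕜 (Submodule.map (B₀ : X →ₗ[𝕜] X) (ker D)) :=
    Module.Finite.map _ _
  have hrangeB : range B₀
      = Submodule.map (B₀ : X →ₗ[𝕜] X) M ⊔ Submodule.map (B₀ : X →ₗ[𝕜] X) (ker D) := by
    apply le_antisymm
    · rintro - ⟨z, rfl⟩
      have hz : z ∈ ker D ⊔ M := by rw [hM.sup_eq_top]; trivial
      obtain ⟨u, hu, v, hv, rfl⟩ := Submodule.mem_sup.1 hz
      rw [map_add]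
      exact Submodule.add_mem _ (Submodule.mem_sup_right ⟨u, hu, rfl⟩)
        (Submodule.mem_sup_left ⟨v, hv, rfl⟩)
    · refine sup_le ?_ ?_ <;> rintro - ⟨z, hz, rfl⟩ <;> exact ⟨z, rfl⟩
  rw [hrangeB]
  exact ⟨ClosedComplemented.sup_finiteDimensional hBM, hkB⟩

end Cor53

/-- Corollary 5.3: if `T` is left semi-Fredholm (closed complemented range, finite-dimensional
kernel) and `K` is compact, then `T+K` and its adjoint `(T+K)* = T* + K*` have closed
complemented range and complemented kernel. -/
theorem compact_perturbation_left_semiFredholm_complemented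
    {𝕜 X : Type*} [RCLike 𝕜] [NormedAddCommGroup X] [NormedSpace 𝕜 X] [CompleteSpace X]
    (T K : X →L[𝕜] X)
    (hclosed : IsClosed ((LinearMap.range (T : X →ₗ[𝕜] X) : Submodule 𝕜 X) : Set X))
    (hR : IsComplementedSubspace (LinearMap.range (T : X →ₗ[𝕜] X)))
    (hker : FiniteDimensional 𝕜 (LinearMap.ker (T : X →ₗ[𝕜] X)))
    (hK : IsCompactOperator K) :
    normedAdjoint (T + K) = normedAdjoint T + normedAdjoint K ∧
    IsClosed ((LinearMap.range ((T + K : X →L[𝕜] X) : X →ₗ[𝕜] X) : Submodule 𝕜 X) : Set X) ∧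
    IsComplementedSubspace (LinearMap.range ((T + K : X →L[𝕜] X) : X →ₗ[𝕜] X)) ∧
    IsComplementedSubspace (LinearMap.ker ((T + K : X →L[𝕜] X) : X →ₗ[𝕜] X)) ∧
    IsClosed ((LinearMap.range ((normedAdjoint T + normedAdjoint K :
        StrongDual 𝕜 X →L[𝕜] StrongDual 𝕜 X) : StrongDual 𝕜 X →ₗ[𝕜] StrongDual 𝕜 X) :
        Submodule 𝕜 (StrongDual 𝕜 X)) : Set (StrongDual 𝕜 X)) ∧
    IsComplementedSubspace (LinearMap.range ((normedAdjoint T + normedAdjoint K :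
        StrongDual 𝕜 X →L[𝕜] StrongDual 𝕜 X) : StrongDual 𝕜 X →ₗ[𝕜] StrongDual 𝕜 X)) ∧
    IsComplementedSubspace (LinearMap.ker ((normedAdjoint T + normedAdjoint K :
        StrongDual 𝕜 X →L[𝕜] StrongDual 𝕜 X) : StrongDual 𝕜 X →ₗ[𝕜] StrongDual 𝕜 X)) := by
  classical
  have hadj : normedAdjoint (T + K) = normedAdjoint T + normedAdjoint K :=
    map_add ((ContinuousLinearMap.compL 𝕜 X X 𝕜).flip) T K
  have hRcc : (LinearMap.range (T : X →ₗ[𝕜] X)).ClosedComplemented :=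
    (Cor53.isComplementedSubspace_iff_closedComplemented _).1 hR
  haveI := hker
  have hkTcc : (LinearMap.ker (T : X →ₗ[𝕜] X)).ClosedComplemented :=
    Submodule.ClosedComplemented.of_finiteDimensional _
  obtain ⟨S, hS⟩ := Cor53.exists_generalized_inverse T hkTcc hRcc
  set P : X →L[𝕜] X := 1 - S ∘L T with hP
  have hSpt : ∀ x, T (S (T x)) = T x := fun x => ContinuousLinearMap.ext_iff.1 hS x
  have hPrange : LinearMap.range (P : X →ₗ[𝕜] X) ≤ LinearMap.ker (T : X →ₗ[𝕜] X) := by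
    rintro - ⟨x, rfl⟩
    rw [LinearMap.mem_ker]
    have : P x = x - S (T x) := rfl
    rw [ContinuousLinearMap.coe_coe, ContinuousLinearMap.coe_coe, this, map_sub, hSpt x, sub_self]
  haveI : FiniteDimensional 𝕜 (LinearMap.range (P : X →ₗ[𝕜] X)) :=
    Submodule.finiteDimensional_of_le hPrange
  have hPcomp : IsCompactOperator ⇑P :=
    Cor53.isCompactOperator_of_finiteDimensional_range P inferInstance
  have hC : IsCompactOperator ⇑(S ∘L (T + K) - 1) := by
    have heq : ⇑(S ∘L (T + K) - 1) = (fun x => S (K x)) - ⇑P := by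
      funext x
      show S (T x + K x) - x = S (K x) - (x - S (T x))
      rw [map_add]
      abel
    rw [heq]
    exact (hK.continuous_comp S.continuous).sub hPcomp
  obtain ⟨hRcc', hkfd'⟩ := Cor53.atkinson (T + K) S hC
  haveI := hkfd'
  have hkcc' : (LinearMap.ker ((T + K : X →L[𝕜] X) : X →ₗ[𝕜] X)).ClosedComplemented :=
    Submodule.ClosedComplemented.of_finiteDimensional _
  obtain ⟨S₀, hS₀⟩ := Cor53.exists_generalized_inverse (T + K) hkcc' hRcc'
  have hS₀' : normedAdjoint (T + K) ∘L normedAdjoint S₀ ∘L normedAdjoint (T + K)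
      = normedAdjoint (T + K) := by
    ext f x
    exact congrArg f (ContinuousLinearMap.ext_iff.1 hS₀ x)
  obtain ⟨hr', hk'⟩ :=
    Cor53.closedComplemented_of_relRegular (normedAdjoint (T + K)) (normedAdjoint S₀) hS₀'
  rw [hadj] at hr' hk'
  exact ⟨hadj, hRcc'.isClosed,
    (Cor53.isComplementedSubspace_iff_closedComplemented _).2 hRcc',
    (Cor53.isComplementedSubspace_iff_closedComplemented _).2 hkcc',
    hr'.isClosed,
    (Cor53.isComplementedSubspace_iff_closedComplemented _).2 hr',
    (Cor53.isComplementedSubspace_iff_closedComplemented _).2 hk'⟩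
end
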